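/- Let $(\Omega,\mathcal{F},\mathbb{P})$ be a probability space and let $E = L^2(\Omega,\mathbb{P};\mathbb{R})$ with norm $\|\cdot\|_\omega$. Fix integers $n_M \geq 0$ and $N_T > n_M$, a real $\Delta t > 0$, a map $N : E^{n_M+1} \to E$, and a constant $\Lambda \geq 0$ such that for all $V = (V_0,\ldots,V_{n_M})$ and $U = (U_0,\ldots,U_{n_M})$ in $E^{n_M+1}$, $\|N(V) - N(U)\|_\omega \leq \Lambda \sum_{k=0}^{n_M} \|V_k - U_k\|_\omega$. Let $u, v : \{0,\ldots,N_T\} \to E$ and $\tau : \{n_M+1,\ldots,N_T\} \to E$ satisfy: (i) $v_{n+1} = v_n + N(v_n, v_{n-1}, \ldots, v_{n-n_M})$ for all $n_M \leq n < N_T$; (ii) $u_{n+1} = u_n + N(u_n, u_{n-1}, \ldots, u_{n-n_M}) + \Delta t \cdot \tau_{n+1}$ for all $n_M \leq n < N_T$; (iii) $v_n = u_n$ for all $0 \leq n \leq n_M$. Let $\tau_{max} \geq \max_{n_M < n \leq N_T} \|\tau_n\|_\omega$. Then for every $n$ with $n_M \leq n \leq N_T$, $\|v_n - u_n\|_\omega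 \leq \tau_{max} \cdot n \Delta t \cdot e^{\, n (n_M+1) \Lambda}$. -/

import Mathlib

open MeasureTheory
open scoped BigOperators

/-- Error bound for a DNN flow-map model with `n_M ≥ 0` memory steps
(the paper's main theorem).  With `E = L²(Ω, P; ℝ)`, a model map
`N : E^{n_M+1} → E` that is Lipschitz with constant `Λ`, model states `v`
satisfying `v_{n+1} = v_n + N(v_n, …, v_{n-n_M})`, exact states `u`
satisfying `u_{n+1} = u_n + N(u_n, …, u_{n-n_M}) + Δt τ_{n+1}` (defining the
local truncation errors `τ`), exact initial data `v_n = u_n` for `n ≤ n_M`,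
and `τ_max` bounding `‖τ_n‖` for `n_M < n ≤ N_T`, we have
`‖v_n - u_n‖ ≤ τ_max · n Δt · exp (n (n_M+1) Λ)` for `n_M ≤ n ≤ N_T`. -/
theorem dnn_flow_map_error_bound
    {Ω : Type*} [MeasurableSpace Ω] (P : Measure Ω) [IsProbabilityMeasure P]
    (nM NT : ℕ) (hNT : nM < NT)
    (Δt : ℝ) (hΔt : 0 < Δt)
    (N : (Fin (nM + 1) → Lp ℝ 2 P) → Lp ℝ 2 P)
    (Λ : ℝ) (hΛ : 0 ≤ Λ)
    (hLip : ∀ V U : Fin (nM + 1) → Lp ℝ 2 P,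
      ‖N V - N U‖ ≤ Λ * ∑ k, ‖V k - U k‖)
    (u v : ℕ → Lp ℝ 2 P) (τ : ℕ → Lp ℝ 2 P)
    (hv : ∀ n, nM ≤ n → n < NT → v (n + 1) = v n + N (fun k => v (n - (k : ℕ))))
    (hu : ∀ n, nM ≤ n → n < NT →
      u (n + 1) = u n + N (fun k => u (n - (k : ℕ))) + Δt • τ (n + 1))
    (hinit : ∀ n ≤ nM, v n = u n)
    (τmax : ℝ) (hτ : ∀ n, nM < n → n ≤ NT → ‖τ n‖ ≤ τmax) :
    ∀ n, nM ≤ n → n ≤ NT →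
      ‖v n - u n‖ ≤ τmax * (n * Δt) * Real.exp ((n : ℝ) * (nM + 1) * Λ) := by
  have hτ0 : 0 ≤ τmax := le_trans (norm_nonneg _) (hτ (nM + 1) (Nat.lt_succ_self nM) hNT)
  set B : ℕ → ℝ := fun n => τmax * (n * Δt) * Real.exp ((n : ℝ) * (nM + 1) * Λ) with hB
  have hBnn : ∀ n, 0 ≤ B n := by
    intro n
    exact mul_nonneg (mul_nonneg hτ0 (mul_nonneg (Nat.cast_nonneg n) hΔt.le)) (Real.exp_nonneg _)
  have hBmono : ∀ a b : ℕ, a ≤ b → B a ≤ B b := by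
    intro a b hab
    have h1 : (a : ℝ) ≤ b := Nat.cast_le.mpr hab
    apply mul_le_mul
    · apply mul_le_mul_of_nonneg_left _ hτ0
      exact mul_le_mul_of_nonneg_right h1 hΔt.le
    · apply Real.exp_le_exp.mpr
      apply mul_le_mul_of_nonneg_right _ hΛ
      apply mul_le_mul_of_nonneg_right h1 (by positivity)
    · exact Real.exp_nonneg _
    · exact mul_nonneg hτ0 (mul_nonneg (Nat.cast_nonneg b) hΔt.le)
  have key : ∀ n, n ≤ NT → ‖v n - u n‖ ≤ B n := by
    intro n
    induction n using Nat.strong_induction_on with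
    | _ n ih =>
      intro hn
      rcases le_or_gt n nM with h | h
      · rw [hinit n h]
        simpa using hBnn n
      · obtain ⟨m, rfl⟩ : ∃ m, n = m + 1 := ⟨n - 1, by omega⟩
        have hm : nM ≤ m := by omega
        have hm' : m < NT := by omega
        have hdiff : v (m + 1) - u (m + 1)
            = (v m - u m) + (N (fun k => v (m - (k : ℕ))) - N (fun k => u (m - (k : ℕ))))
              - Δt • τ (m + 1) := by
          rw [hv m hm hm', hu m hm hm']; abel
        have hsum : ∑ k : Fin (nM + 1), ‖v (m - (k : ℕ)) - u (m - (k : ℕ))‖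
            ≤ (nM + 1 : ℝ) * B m := by
          calc ∑ k : Fin (nM + 1), ‖v (m - (k : ℕ)) - u (m - (k : ℕ))‖
              ≤ ∑ _k : Fin (nM + 1), B m := by
                apply Finset.sum_le_sum
                intro k _
                exact le_trans (ih (m - (k : ℕ)) (by omega) (by omega))
                  (hBmono _ _ (Nat.sub_le _ _))
            _ = (nM + 1 : ℝ) * B m := by
                rw [Finset.sum_const, Finset.card_univ, Fintype.card_fin]
                ring
        have h1 : ‖v (m + 1) - u (m + 1)‖
            ≤ B m + Λ * ((nM + 1 : ℝ) * B m) + Δt * τmax := by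
          rw [hdiff]
          calc ‖(v m - u m) + (N (fun k => v (m - (k : ℕ))) - N (fun k => u (m - (k : ℕ))))
                - Δt • τ (m + 1)‖
              ≤ ‖v m - u m‖ + ‖N (fun k => v (m - (k : ℕ))) - N (fun k => u (m - (k : ℕ)))‖
                + ‖Δt • τ (m + 1)‖ := by
                refine le_trans (norm_sub_le _ _) ?_
                exact add_le_add_left (norm_add_le _ _) _
            _ ≤ B m + Λ * ((nM + 1 : ℝ) * B m) + Δt * τmax := by
                refine add_le_add (add_le_add (ih m (by omega) (by omega)) ?_) ?_
                · refine le_trans (hLip _ _) ?_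
                  exact mul_le_mul_of_nonneg_left hsum hΛ
                · rw [norm_smul, Real.norm_eq_abs, abs_of_pos hΔt]
                  exact mul_le_mul_of_nonneg_left (hτ (m + 1) (by omega) (by omega)) hΔt.le
        refine le_trans h1 ?_
        have hexp : (1 + (nM + 1 : ℝ) * Λ) ≤ Real.exp ((nM + 1 : ℝ) * Λ) := by
          have := Real.add_one_le_exp ((nM + 1 : ℝ) * Λ)
          linarith
        have h2 : B m + Λ * ((nM + 1 : ℝ) * B m) = B m * (1 + (nM + 1 : ℝ) * Λ) := by ring
        rw [h2]
        have h3 : B m * (1 + (nM + 1 : ℝ) * Λ) ≤ B m * Real.exp ((nM + 1 : ℝ) * Λ) :=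
          mul_le_mul_of_nonneg_left hexp (hBnn m)
        have h4 : B m * Real.exp ((nM + 1 : ℝ) * Λ)
            = τmax * (m * Δt) * Real.exp (((m : ℝ) + 1) * (nM + 1) * Λ) := by
          rw [hB]
          rw [mul_assoc, ← Real.exp_add]
          ring_nf
        have h5 : Δt * τmax ≤ τmax * Δt * Real.exp (((m : ℝ) + 1) * (nM + 1) * Λ) := by
          have he1 : (1 : ℝ) ≤ Real.exp (((m : ℝ) + 1) * (nM + 1) * Λ) :=
            Real.one_le_exp (by positivity)
          nlinarith [mul_nonneg hτ0 hΔt.le]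
        have hgoal : B (m + 1) = τmax * ((m : ℝ) + 1) * Δt * Real.exp (((m : ℝ) + 1) * (nM + 1) * Λ) := by
          rw [hB]; push_cast; ring
        rw [hgoal]
        calc B m * (1 + (nM + 1 : ℝ) * Λ) + Δt * τmax
            ≤ τmax * (m * Δt) * Real.exp (((m : ℝ) + 1) * (nM + 1) * Λ)
              + τmax * Δt * Real.exp (((m : ℝ) + 1) * (nM + 1) * Λ) := by
              rw [← h4]; exact add_le_add h3 h5
          _ = τmax * ((m : ℝ) + 1) * Δt * Real.exp (((m : ℝ) + 1) * (nM + 1) * Λ) := by ring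
  intro n _ hn2
  exact key n hn2
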